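/- The Ribe function F₀ is homogeneous: F₀(r x) = r F₀(x) for all r ∈ ℝ and all finitely supported real sequences x. -/

import Mathlib

/-- The Ribe function on finitely supported real sequences,
with the convention `0 * log 0 = 0` (note `Real.log 0 = 0`). -/
noncomputable def ribe (x : ℕ →₀ ℝ) : ℝ :=
  (∑ i ∈ x.support, x i * Real.log |x i|) -
    (∑ i ∈ x.support, x i) * Real.log |∑ i ∈ x.support, x i|

theorem ribe_homogeneous (r : ℝ) (x : ℕ →₀ ℝ) : ribe (r • x) = r * ribe x := by
  rcases eq_or_ne r 0 with hr | hr
  · simp [ribe, hr]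
  · have hsupp : (r • x).support = x.support := Finsupp.support_smul_eq hr
    have happ : ∀ i, (r • x) i = r * x i := fun i => rfl
    set S := ∑ i ∈ x.support, x i with hS
    have hsum1 : ∑ i ∈ x.support, (r * x i) * Real.log |r * x i|
        = r * Real.log |r| * S + r * ∑ i ∈ x.support, x i * Real.log |x i| := by
      rw [hS, Finset.mul_sum, Finset.mul_sum, ← Finset.sum_add_distrib]
      refine Finset.sum_congr rfl fun i hi => ?_
      have hxi : x i ≠ 0 := Finsupp.mem_support_iff.mp hi
      rw [abs_mul, Real.log_mul (abs_ne_zero.mpr hr) (abs_ne_zero.mpr hxi)]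
      ring
    have hsum2 : ∑ i ∈ x.support, (r * x i) = r * S := by
      rw [hS, Finset.mul_sum]
    have hlast : (r * S) * Real.log |r * S|
        = r * Real.log |r| * S + r * (S * Real.log |S|) := by
      rcases eq_or_ne S 0 with h0 | h0
      · simp [h0]
      · rw [abs_mul, Real.log_mul (abs_ne_zero.mpr hr) (abs_ne_zero.mpr h0)]
        ring
    simp only [ribe, hsupp, happ, hsum1, hsum2, hlast]
    ring
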